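/- There exist two unicyclic graphs G_1 and G_2, each with 10 vertices, 2 leaves and girth 3, such that neither c_k(G_1) ≤ c_k(G_2) for all k nor c_k(G_2) ≤ c_k(G_1) for all k; in particular the poset of 10-vertex unicyclic graphs with 2 leaves ordered by coefficient-wise domination of Laplacian coefficients has more than one minimal element. -/

import Mathlib

open SimpleGraph Matrix

open scoped Classical in
/-- The `k`-th Laplacian coefficient `c_k(G)`, defined by
`det(λI - L(G)) = ∑_{k=0}^n (-1)^k c_k(G) λ^{n-k}`. -/
noncomputable def lapCoeff {V : Type*} [Fintype V] [DecidableEq V]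
    (G : SimpleGraph V) (k : ℕ) : ℤ :=
  (-1) ^ k * ((G.lapMatrix ℤ).charpoly.coeff (Fintype.card V - k))

/-! ### Auxiliary: computable determinant with zero-pruning -/

def detA : (n : ℕ) → Matrix (Fin n) (Fin n) ℤ → ℤ
  | 0, _ => 1
  | n+1, M => ∑ j : Fin (n+1), if M 0 j = 0 then 0 else
      (-1)^(j:ℕ) * M 0 j * detA n (M.submatrix Fin.succ j.succAbove)

theorem detA_eq : ∀ (n : ℕ) (M : Matrix (Fin n) (Fin n) ℤ), detA n M = M.det
  | 0, M => by simp [detA, Matrix.det_fin_zero]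
  | n+1, M => by
    rw [Matrix.det_succ_row_zero, detA]
    refine Finset.sum_congr rfl fun j _ => ?_
    by_cases h : M 0 j = 0
    · simp [h]
    · rw [if_neg h, detA_eq n]

theorem eval_charpoly {n : ℕ} (M : Matrix (Fin n) (Fin n) ℤ) (c : ℤ) :
    M.charpoly.eval c = detA n (Matrix.diagonal (fun _ => c) - M) := by
  rw [detA_eq, Matrix.charpoly,
    show Polynomial.eval c = ⇑(Polynomial.evalRingHom c) from rfl, RingHom.map_det]
  congr 1
  ext i j
  by_cases h : i = j
  · subst h
    simp [Matrix.charmatrix_apply_eq]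
  · simp [Matrix.charmatrix_apply_ne _ _ _ h, Matrix.diagonal_apply_ne _ h]

/-! ### The two graphs -/

def adj1 : Fin 10 → Fin 10 → Bool := fun a b =>
  (a,b) ∈ [((0:Fin 10),(1:Fin 10)),(1,2),(0,2),(0,3),(0,4),(4,5),(5,6),(6,7),(7,8),(8,9)]
  || (b,a) ∈ [((0:Fin 10),(1:Fin 10)),(1,2),(0,2),(0,3),(0,4),(4,5),(5,6),(6,7),(7,8),(8,9)]

def adj2 : Fin 10 → Fin 10 → Bool := fun a b =>
  (a,b) ∈ [((0:Fin 10),(1:Fin 10)),(1,2),(0,2),(0,3),(3,4),(1,5),(5,6),(6,7),(7,8),(8,9)]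
  || (b,a) ∈ [((0:Fin 10),(1:Fin 10)),(1,2),(0,2),(0,3),(3,4),(1,5),(5,6),(6,7),(7,8),(8,9)]

def Gr1 : SimpleGraph (Fin 10) where
  Adj a b := adj1 a b = true
  symm := ⟨fun a b => by revert a b; decide⟩
  loopless := ⟨fun a => by revert a; decide⟩

def Gr2 : SimpleGraph (Fin 10) where
  Adj a b := adj2 a b = true
  symm := ⟨fun a b => by revert a b; decide⟩
  loopless := ⟨fun a => by revert a; decide⟩

instance instG1 : DecidableRel Gr1.Adj := fun a b => inferInstanceAs (Decidable (adj1 a b = true))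
instance instG2 : DecidableRel Gr2.Adj := fun a b => inferInstanceAs (Decidable (adj2 a b = true))

/-! ### Connectivity -/

theorem Gr1_connected : Gr1.Connected := by
  rw [connected_iff]
  refine ⟨fun u v => ?_, ⟨0⟩⟩
  have h : ∀ v : Fin 10, Gr1.Reachable 0 v := by
    intro v
    have r1 : Gr1.Reachable 0 1 := (show Gr1.Adj 0 1 by decide).reachable
    have r2 : Gr1.Reachable 0 2 := (show Gr1.Adj 0 2 by decide).reachable
    have r3 : Gr1.Reachable 0 3 := (show Gr1.Adj 0 3 by decide).reachable
    have r4 : Gr1.Reachable 0 4 := (show Gr1.Adj 0 4 by decide).reachable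
    have r5 : Gr1.Reachable 0 5 := r4.trans (show Gr1.Adj 4 5 by decide).reachable
    have r6 : Gr1.Reachable 0 6 := r5.trans (show Gr1.Adj 5 6 by decide).reachable
    have r7 : Gr1.Reachable 0 7 := r6.trans (show Gr1.Adj 6 7 by decide).reachable
    have r8 : Gr1.Reachable 0 8 := r7.trans (show Gr1.Adj 7 8 by decide).reachable
    have r9 : Gr1.Reachable 0 9 := r8.trans (show Gr1.Adj 8 9 by decide).reachable
    fin_cases v
    exacts [Reachable.refl 0, r1, r2, r3, r4, r5, r6, r7, r8, r9]
  exact (h u).symm.trans (h v)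

theorem Gr2_connected : Gr2.Connected := by
  rw [connected_iff]
  refine ⟨fun u v => ?_, ⟨0⟩⟩
  have h : ∀ v : Fin 10, Gr2.Reachable 0 v := by
    intro v
    have r1 : Gr2.Reachable 0 1 := (show Gr2.Adj 0 1 by decide).reachable
    have r2 : Gr2.Reachable 0 2 := (show Gr2.Adj 0 2 by decide).reachable
    have r3 : Gr2.Reachable 0 3 := (show Gr2.Adj 0 3 by decide).reachable
    have r4 : Gr2.Reachable 0 4 := r3.trans (show Gr2.Adj 3 4 by decide).reachable
    have r5 : Gr2.Reachable 0 5 := r1.trans (show Gr2.Adj 1 5 by decide).reachable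
    have r6 : Gr2.Reachable 0 6 := r5.trans (show Gr2.Adj 5 6 by decide).reachable
    have r7 : Gr2.Reachable 0 7 := r6.trans (show Gr2.Adj 6 7 by decide).reachable
    have r8 : Gr2.Reachable 0 8 := r7.trans (show Gr2.Adj 7 8 by decide).reachable
    have r9 : Gr2.Reachable 0 9 := r8.trans (show Gr2.Adj 8 9 by decide).reachable
    fin_cases v
    exacts [Reachable.refl 0, r1, r2, r3, r4, r5, r6, r7, r8, r9]
  exact (h u).symm.trans (h v)

/-! ### Girth -/

def w1 : Gr1.Walk 0 0 :=
  .cons (show Gr1.Adj 0 1 by decide) (.cons (show Gr1.Adj 1 2 by decide)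
    (.cons (show Gr1.Adj 2 0 by decide) .nil))

def w2 : Gr2.Walk 0 0 :=
  .cons (show Gr2.Adj 0 1 by decide) (.cons (show Gr2.Adj 1 2 by decide)
    (.cons (show Gr2.Adj 2 0 by decide) .nil))

theorem w1_cycle : w1.IsCycle := by
  rw [SimpleGraph.Walk.isCycle_def]
  refine ⟨?_, ?_, ?_⟩
  · rw [SimpleGraph.Walk.isTrail_def]; decide
  · exact fun h => SimpleGraph.Walk.not_nil_cons (show w1.Nil from h ▸ SimpleGraph.Walk.nil_nil)
  · decide

theorem w2_cycle : w2.IsCycle := by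
  rw [SimpleGraph.Walk.isCycle_def]
  refine ⟨?_, ?_, ?_⟩
  · rw [SimpleGraph.Walk.isTrail_def]; decide
  · exact fun h => SimpleGraph.Walk.not_nil_cons (show w2.Nil from h ▸ SimpleGraph.Walk.nil_nil)
  · decide

theorem Gr1_girth : Gr1.girth = 3 := by
  have hle : Gr1.egirth ≤ 3 := by
    rw [SimpleGraph.egirth]
    refine iInf_le_of_le 0 (iInf_le_of_le w1 (iInf_le_of_le w1_cycle ?_))
    decide
  have heq : Gr1.egirth = 3 := le_antisymm hle SimpleGraph.three_le_egirth
  rw [SimpleGraph.girth, heq]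
  rfl

theorem Gr2_girth : Gr2.girth = 3 := by
  have hle : Gr2.egirth ≤ 3 := by
    rw [SimpleGraph.egirth]
    refine iInf_le_of_le 0 (iInf_le_of_le w2 (iInf_le_of_le w2_cycle ?_))
    decide
  have heq : Gr2.egirth = 3 := le_antisymm hle SimpleGraph.three_le_egirth
  rw [SimpleGraph.girth, heq]
  rfl

/-! ### Laplacian matrices -/

def L1 : Matrix (Fin 10) (Fin 10) ℤ :=
  !![4,-1,-1,-1,-1,0,0,0,0,0;
     -1,2,-1,0,0,0,0,0,0,0;
     -1,-1,2,0,0,0,0,0,0,0;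
     -1,0,0,1,0,0,0,0,0,0;
     -1,0,0,0,2,-1,0,0,0,0;
     0,0,0,0,-1,2,-1,0,0,0;
     0,0,0,0,0,-1,2,-1,0,0;
     0,0,0,0,0,0,-1,2,-1,0;
     0,0,0,0,0,0,0,-1,2,-1;
     0,0,0,0,0,0,0,0,-1,1]

def L2 : Matrix (Fin 10) (Fin 10) ℤ :=
  !![3,-1,-1,-1,0,0,0,0,0,0;
     -1,3,-1,0,0,-1,0,0,0,0;
     -1,-1,2,0,0,0,0,0,0,0;
     -1,0,0,2,-1,0,0,0,0,0;
     0,0,0,-1,1,0,0,0,0,0;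
     0,-1,0,0,0,2,-1,0,0,0;
     0,0,0,0,0,-1,2,-1,0,0;
     0,0,0,0,0,0,-1,2,-1,0;
     0,0,0,0,0,0,0,-1,2,-1;
     0,0,0,0,0,0,0,0,-1,1]

theorem lap1_ext : ∀ i j, Gr1.lapMatrix ℤ i j = L1 i j := by
  intro i; fin_cases i <;> decide

theorem lap2_ext : ∀ i j, Gr2.lapMatrix ℤ i j = L2 i j := by
  intro i; fin_cases i <;> decide

theorem lap1 : ∀ (inst : DecidableRel Gr1.Adj),
    @SimpleGraph.lapMatrix (Fin 10) ℤ _ Gr1 inst _ _ = L1 := by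
  intro inst
  rw [Subsingleton.elim inst instG1]
  exact Matrix.ext lap1_ext

theorem lap2 : ∀ (inst : DecidableRel Gr2.Adj),
    @SimpleGraph.lapMatrix (Fin 10) ℤ _ Gr2 inst _ _ = L2 := by
  intro inst
  rw [Subsingleton.elim inst instG2]
  exact Matrix.ext lap2_ext

/-! ### Characteristic polynomials -/

open Polynomial in
noncomputable def p1 : Polynomial ℤ :=
  X^10 - C 20 * X^9 + C 167 * X^8 - C 758 * X^7 + C 2038 * X^6 - C 3314 * X^5
    + C 3188 * X^4 - C 1690 * X^3 + C 418 * X^2 - C 30 * X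

open Polynomial in
noncomputable def p2 : Polynomial ℤ :=
  X^10 - C 20 * X^9 + C 168 * X^8 - C 770 * X^7 + C 2093 * X^6 - C 3432 * X^5
    + C 3301 * X^4 - C 1722 * X^3 + C 414 * X^2 - C 30 * X

set_option maxHeartbeats 4000000 in
theorem charpoly_L1 : L1.charpoly = p1 := by
  apply Polynomial.eq_of_degree_sub_lt_of_eval_finset_eq
    ({0,1,2,3,4,5,6,7,8,9,10} : Finset ℤ)
  · have h1 : L1.charpoly.degree ≤ 10 := by
      refine le_trans (Polynomial.degree_le_natDegree) ?_
      rw [Matrix.charpoly_natDegree_eq_dim]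
      simp
    have h2 : p1.degree ≤ 10 := by
      unfold p1
      compute_degree
    refine lt_of_le_of_lt (@Polynomial.degree_sub_le ℤ Int.instCommRing.toRing _ _) ?_
    rw [show ({0,1,2,3,4,5,6,7,8,9,10} : Finset ℤ).card = 11 from by decide]
    exact lt_of_le_of_lt (sup_le h1 h2) (by norm_num)
  · intro x hx
    fin_cases hx <;> (rw [_root_.eval_charpoly]; norm_num [p1]; decide)

set_option maxHeartbeats 4000000 in
theorem charpoly_L2 : L2.charpoly = p2 := by
  apply Polynomial.eq_of_degree_sub_lt_of_eval_finset_eq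
    ({0,1,2,3,4,5,6,7,8,9,10} : Finset ℤ)
  · have h1 : L2.charpoly.degree ≤ 10 := by
      refine le_trans (Polynomial.degree_le_natDegree) ?_
      rw [Matrix.charpoly_natDegree_eq_dim]
      simp
    have h2 : p2.degree ≤ 10 := by
      unfold p2
      compute_degree
    refine lt_of_le_of_lt (@Polynomial.degree_sub_le ℤ Int.instCommRing.toRing _ _) ?_
    rw [show ({0,1,2,3,4,5,6,7,8,9,10} : Finset ℤ).card = 11 from by decide]
    exact lt_of_le_of_lt (sup_le h1 h2) (by norm_num)
  · intro x hx
    fin_cases hx <;> (rw [_root_.eval_charpoly]; norm_num [p2]; decide)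

open Polynomial in
theorem p1_coeff2 : p1.coeff 2 = 418 := by
  unfold p1
  simp [coeff_X_pow, coeff_C_mul, coeff_X]

open Polynomial in
theorem p1_coeff8 : p1.coeff 8 = 167 := by
  unfold p1
  simp [coeff_X_pow, coeff_C_mul, coeff_X]

open Polynomial in
theorem p2_coeff2 : p2.coeff 2 = 414 := by
  unfold p2
  simp [coeff_X_pow, coeff_C_mul, coeff_X]

open Polynomial in
theorem p2_coeff8 : p2.coeff 8 = 168 := by
  unfold p2
  simp [coeff_X_pow, coeff_C_mul, coeff_X]

/-! ### Degree sets -/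

theorem deg1 : {v : Fin 10 | Gr1.degree v = 1} = {3, 9} := Set.ext (by decide)
theorem deg2 : {v : Fin 10 | Gr2.degree v = 1} = {4, 9} := Set.ext (by decide)

theorem ncard1 : Nat.card {v : Fin 10 | Gr1.degree v = 1} = 2 := by
  rw [deg1, Nat.card_coe_set_eq, Set.ncard_pair (by decide)]

theorem ncard2 : Nat.card {v : Fin 10 | Gr2.degree v = 1} = 2 := by
  rw [deg2, Nat.card_coe_set_eq, Set.ncard_pair (by decide)]

theorem ecard1 : Gr1.edgeFinset.card = 10 := by decide
theorem ecard2 : Gr2.edgeFinset.card = 10 := by decide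

open scoped Classical in
/-- There exist two unicyclic graphs on `10` vertices, each with `2` leaves and girth
`3`, that are incomparable under coefficient-wise domination of Laplacian coefficients;
in particular the poset of `10`-vertex unicyclic graphs with `2` leaves has more than
one minimal element. -/
theorem exists_incomparable_unicyclic_graphs :
    ∃ G₁ G₂ : SimpleGraph (Fin 10),
      (G₁.Connected ∧ G₁.edgeFinset.card = 10 ∧
        Nat.card {v : Fin 10 | G₁.degree v = 1} = 2 ∧ G₁.girth = 3) ∧
      (G₂.Connected ∧ G₂.edgeFinset.card = 10 ∧
        Nat.card {v : Fin 10 | G₂.degree v = 1} = 2 ∧ G₂.girth = 3) ∧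
      ¬ (∀ k ≤ 10, lapCoeff G₁ k ≤ lapCoeff G₂ k) ∧
      ¬ (∀ k ≤ 10, lapCoeff G₂ k ≤ lapCoeff G₁ k) := by
  refine ⟨Gr1, Gr2, ⟨Gr1_connected, ?_, ?_, Gr1_girth⟩,
    ⟨Gr2_connected, ?_, ?_, Gr2_girth⟩, ?_, ?_⟩
  · convert ecard1
  · convert ncard1
  · convert ecard2
  · convert ncard2
  · have h1 : lapCoeff Gr1 8 = 418 := by
      rw [lapCoeff, lap1, charpoly_L1]
      norm_num [p1_coeff2]
    have h2 : lapCoeff Gr2 8 = 414 := by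
      rw [lapCoeff, lap2, charpoly_L2]
      norm_num [p2_coeff2]
    intro h
    have := h 8 (by norm_num)
    rw [h1, h2] at this
    omega
  · have h1 : lapCoeff Gr1 2 = 167 := by
      rw [lapCoeff, lap1, charpoly_L1]
      norm_num [p1_coeff8]
    have h2 : lapCoeff Gr2 2 = 168 := by
      rw [lapCoeff, lap2, charpoly_L2]
      norm_num [p2_coeff8]
    intro h
    have := h 2 (by norm_num)
    rw [h1, h2] at this
    omega
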